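/- If an infinite sequence σ of truth assignments over AP satisfies a co-safe LTL formula φ, then there exists a finite index i ≥ 0 such that the finite prefix σ_{≤i} satisfies φ. -/
import Mathlib


/-- LTL formulas over atoms `α`, with constants `tt`/`ff`, negation, conjunction,
disjunction, next `○` and until `U`. -/
inductive LTL (α : Type) : Type where
  | tt : LTL α
  | ff : LTL α
  | atom : α → LTL α
  | not : LTL α → LTL α
  | and : LTL α → LTL α → LTL α
  | or : LTL α → LTL α → LTL α
  | next : LTL α → LTL α
  | untl : LTL α → LTL α → LTL α

/-- Satisfaction `⟨σ,i⟩ ⊨ φ` over infinite traces `σ : ℕ → Set α`. -/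
def SatInf {α : Type} (σ : ℕ → Set α) : ℕ → LTL α → Prop
  | _, .tt => True
  | _, .ff => False
  | i, .atom p => p ∈ σ i
  | i, .not φ => ¬ SatInf σ i φ
  | i, .and φ ψ => SatInf σ i φ ∧ SatInf σ i ψ
  | i, .or φ ψ => SatInf σ i φ ∨ SatInf σ i ψ
  | i, .next φ => SatInf σ (i + 1) φ
  | i, .untl φ ψ => ∃ j, i ≤ j ∧ SatInf σ j ψ ∧ ∀ k, i ≤ k → k < j → SatInf σ k φ

/-- Satisfaction `⟨σ,i⟩ ⊨ φ` over finite traces `σ : List (Set α)`;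
positions of `σ` are the indices `< σ.length`. -/
def SatFin {α : Type} (σ : List (Set α)) : ℕ → LTL α → Prop
  | _, .tt => True
  | _, .ff => False
  | i, .atom p => p ∈ σ.getD i ∅
  | i, .not φ => ¬ SatFin σ i φ
  | i, .and φ ψ => SatFin σ i φ ∧ SatFin σ i ψ
  | i, .or φ ψ => SatFin σ i φ ∨ SatFin σ i ψ
  | i, .next φ => i + 1 < σ.length ∧ SatFin σ (i + 1) φ
  | i, .untl φ ψ =>
      ∃ j, i ≤ j ∧ j < σ.length ∧ SatFin σ j ψ ∧ ∀ k, i ≤ k → k < j → SatFin σ k φ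

/-- The co-safe fragment of LTL: negation on atoms only. -/
inductive CoSafe {α : Type} : LTL α → Prop
  | atom (p : α) : CoSafe (.atom p)
  | natom (p : α) : CoSafe (.not (.atom p))
  | and {φ ψ : LTL α} : CoSafe φ → CoSafe ψ → CoSafe (.and φ ψ)
  | or {φ ψ : LTL α} : CoSafe φ → CoSafe ψ → CoSafe (.or φ ψ)
  | next {φ : LTL α} : CoSafe φ → CoSafe (.next φ)
  | untl {φ ψ : LTL α} : CoSafe φ → CoSafe ψ → CoSafe (.untl φ ψ)

/-- The finite prefix `σ₀, …, σᵢ` of an infinite trace `σ`. -/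
def prefixUpTo {α : Type} (σ : ℕ → Set α) (i : ℕ) : List (Set α) :=
  (List.range (i + 1)).map σ

/-- Concatenation `w · σ'` of a finite trace with an infinite trace. -/
def appendInf {α : Type} (w : List (Set α)) (σ' : ℕ → Set α) : ℕ → Set α :=
  fun n => w.getD n (σ' (n - w.length))

lemma length_prefixUpTo {α : Type} (σ : ℕ → Set α) (n : ℕ) :
    (prefixUpTo σ n).length = n + 1 := by simp [prefixUpTo]

lemma getD_prefixUpTo {α : Type} (σ : ℕ → Set α) {n k : ℕ} (h : k ≤ n) :
    (prefixUpTo σ n).getD k ∅ = σ k := by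
  have hk : k < n + 1 := Nat.lt_succ_of_le h
  simp [prefixUpTo, List.getD, List.getElem?_map, List.getElem?_range hk]

lemma satFin_mono {α : Type} (σ : ℕ → Set α) {φ : LTL α} (hφ : CoSafe φ) :
    ∀ i n m, i ≤ n → n ≤ m → SatFin (prefixUpTo σ n) i φ →
      SatFin (prefixUpTo σ m) i φ := by
  induction hφ with
  | atom p =>
    intro i n m hin hnm hs
    simp only [SatFin] at hs ⊢
    rwa [getD_prefixUpTo σ (le_trans hin hnm), ← getD_prefixUpTo σ hin]
  | natom p =>
    intro i n m hin hnm hs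
    simp only [SatFin] at hs ⊢
    rwa [getD_prefixUpTo σ (le_trans hin hnm), ← getD_prefixUpTo σ hin]
  | and _ _ ih1 ih2 =>
    intro i n m hin hnm hs
    exact ⟨ih1 i n m hin hnm hs.1, ih2 i n m hin hnm hs.2⟩
  | or _ _ ih1 ih2 =>
    intro i n m hin hnm hs
    exact hs.imp (ih1 i n m hin hnm) (ih2 i n m hin hnm)
  | next _ ih =>
    intro i n m hin hnm hs
    obtain ⟨hlt, hs⟩ := hs
    rw [length_prefixUpTo] at hlt
    have h1 : i + 1 ≤ n := Nat.lt_succ_iff.mp hlt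
    refine ⟨?_, ih (i + 1) n m h1 hnm hs⟩
    rw [length_prefixUpTo]
    exact Nat.lt_succ_of_le (le_trans h1 hnm)
  | untl _ _ ih1 ih2 =>
    intro i n m hin hnm hs
    obtain ⟨j, hij, hjl, hψ, hk⟩ := hs
    rw [length_prefixUpTo] at hjl
    have hjn : j ≤ n := Nat.lt_succ_iff.mp hjl
    refine ⟨j, hij, by rw [length_prefixUpTo]; omega,
      ih2 j n m hjn hnm hψ, fun k hik hkj => ?_⟩
    exact ih1 k n m (le_trans (Nat.le_of_lt hkj) hjn) hnm (hk k hik hkj)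

lemma cosafe_main {α : Type} (σ : ℕ → Set α) {φ : LTL α} (hφ : CoSafe φ) :
    ∀ i, SatInf σ i φ → ∃ n, i ≤ n ∧ SatFin (prefixUpTo σ n) i φ := by
  induction hφ with
  | atom p =>
    intro i h
    refine ⟨i, le_refl i, ?_⟩
    show p ∈ (prefixUpTo σ i).getD i ∅
    rw [getD_prefixUpTo σ le_rfl]; exact h
  | natom p =>
    intro i h
    refine ⟨i, le_refl i, ?_⟩
    show ¬ p ∈ (prefixUpTo σ i).getD i ∅
    rw [getD_prefixUpTo σ le_rfl]; exact h
  | and h1 h2 ih1 ih2 =>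
    intro i h
    obtain ⟨n1, hn1, hs1⟩ := ih1 i h.1
    obtain ⟨n2, hn2, hs2⟩ := ih2 i h.2
    exact ⟨max n1 n2, le_trans hn1 (le_max_left _ _),
      satFin_mono σ h1 i n1 _ hn1 (le_max_left _ _) hs1,
      satFin_mono σ h2 i n2 _ hn2 (le_max_right _ _) hs2⟩
  | or h1 h2 ih1 ih2 =>
    intro i h
    rcases h with h | h
    · obtain ⟨n, hn, hs⟩ := ih1 i h
      exact ⟨n, hn, Or.inl hs⟩
    · obtain ⟨n, hn, hs⟩ := ih2 i h
      exact ⟨n, hn, Or.inr hs⟩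
  | next h1 ih =>
    intro i h
    obtain ⟨n, hn, hs⟩ := ih (i + 1) h
    exact ⟨n, le_trans (Nat.le_succ i) hn,
      by rw [length_prefixUpTo]; omega, hs⟩
  | untl h1 h2 ih1 ih2 =>
    intro i h
    obtain ⟨j, hij, hψ, hk⟩ := h
    obtain ⟨nψ, hnψ, hsψ⟩ := ih2 j hψ
    -- choose bounds for each k
    choose f hf1 hf2 using fun (k : ℕ) (hk1 : i ≤ k) (hk2 : k < j) =>
      ih1 k (hk k hk1 hk2)
    classical
    set N := max nψ ((Finset.range j).sup fun k =>
      if h : i ≤ k ∧ k < j then f k h.1 h.2 else 0) with hN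
    refine ⟨N, le_trans hij (le_trans hnψ (le_max_left _ _)), j, hij,
      by rw [length_prefixUpTo]; exact Nat.lt_succ_of_le (le_trans hnψ (le_max_left _ _)),
      satFin_mono σ h2 j nψ N hnψ (le_max_left _ _) hsψ,
      fun k hik hkj => ?_⟩
    have hfk : f k hik hkj ≤ N := by
      refine le_trans ?_ (le_max_right nψ _)
      have : (if h : i ≤ k ∧ k < j then f k h.1 h.2 else 0) ≤
          (Finset.range j).sup fun k =>
            if h : i ≤ k ∧ k < j then f k h.1 h.2 else 0 :=
        Finset.le_sup (f := fun k => if h : i ≤ k ∧ k < j then f k h.1 h.2 else 0)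
          (Finset.mem_range.mpr hkj)
      simpa [hik, hkj] using this
    exact satFin_mono σ h1 k _ N (hf1 k hik hkj) hfk (hf2 k hik hkj)

/-- If an infinite sequence σ satisfies a co-safe LTL formula φ,
then some finite prefix σ_{≤i} of σ satisfies φ. -/
theorem cosafe_sat_implies_finite_prefix {AP : Type} (σ : ℕ → Set AP)
    (φ : LTL AP) (hφ : CoSafe φ) (h : SatInf σ 0 φ) :
    ∃ i : ℕ, SatFin (prefixUpTo σ i) 0 φ := by
  obtain ⟨n, _, hs⟩ := cosafe_main σ hφ 0 h
  exact ⟨n, hs⟩
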